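/- Let R be a commutative ring, u ≥ 0, and let B = R[z₁,...,z_u]/(z₁²,...,z_u²). For a subset S ⊆ {1,...,u} write z_S = ∏_{i∈S} z_i, and for k ≥ 0 set y^{[k]} = Σ_{|S|=k} z_S ∈ B. Then for any subset T ⊆ {1,...,u} with complement T̄, the inclusion-exclusion identity z_T = Σ_{S ⊆ T̄} (−1)^{|S|} y^{[|T|−|S|]} · z_S holds in B. -/
import Mathlib


open Finset

noncomputable section

/-- `B R u = R[z₁,…,z_u]/(z₁²,…,z_u²)`, the `R`-algebra on `u` square-zero variables. -/
abbrev SqZeroAlg (R : Type*) [CommRing R] (u : ℕ) : Type _ :=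
  MvPolynomial (Fin u) R ⧸
    Ideal.span (Set.range fun i : Fin u => (MvPolynomial.X i : MvPolynomial (Fin u) R) ^ 2)

/-- The class of the variable `z_i` in `B R u`. -/
def zvar (R : Type*) [CommRing R] (u : ℕ) (i : Fin u) : SqZeroAlg R u :=
  Ideal.Quotient.mk _ (MvPolynomial.X i)

/-- The square-free monomial `z_S = ∏_{i ∈ S} z_i`. -/
def zmon (R : Type*) [CommRing R] (u : ℕ) (S : Finset (Fin u)) : SqZeroAlg R u :=
  ∏ i ∈ S, zvar R u i

/-- `y^{[k]} = Σ_{|S|=k} z_S`, the `k`-th elementary symmetric polynomial in the `z`'s,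
indexed by an integer and declared to vanish in negative degrees. -/
def ysym (R : Type*) [CommRing R] (u : ℕ) (m : ℤ) : SqZeroAlg R u :=
  if 0 ≤ m then
    ∑ S ∈ Finset.powersetCard m.toNat (Finset.univ : Finset (Fin u)), zmon R u S
  else 0

/-- **Inclusion–exclusion in `R[z₁,…,z_u]/(z₁²,…,z_u²)`**: for any `T ⊆ {1,…,u}` with
complement `T̄`, `z_T = Σ_{S ⊆ T̄} (−1)^{|S|} y^{[|T|−|S|]} · z_S`. -/

lemma zvar_sq (R : Type*) [CommRing R] (u : ℕ) (i : Fin u) : zvar R u i ^ 2 = 0 := by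
  have h : (zvar R u i) ^ 2 = Ideal.Quotient.mk _ ((MvPolynomial.X i : MvPolynomial (Fin u) R) ^ 2) := by
    simp [zvar, map_pow]
  rw [h, Ideal.Quotient.eq_zero_iff_mem]
  exact Ideal.subset_span ⟨i, rfl⟩

lemma zmon_mul_disjoint (R : Type*) [CommRing R] (u : ℕ) {A S : Finset (Fin u)}
    (h : Disjoint A S) : zmon R u A * zmon R u S = zmon R u (A ∪ S) :=
  (Finset.prod_union h).symm

lemma zmon_mul_not_disjoint (R : Type*) [CommRing R] (u : ℕ) {A S : Finset (Fin u)}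
    (h : ¬ Disjoint A S) : zmon R u A * zmon R u S = 0 := by
  obtain ⟨i, hiA, hiS⟩ := Finset.not_disjoint_iff.mp h
  rw [zmon, zmon, ← Finset.mul_prod_erase _ _ hiA, ← Finset.mul_prod_erase _ _ hiS,
    mul_mul_mul_comm, ← sq, zvar_sq, zero_mul]

lemma alt_sum_powerset {α : Type*} [DecidableEq α] (B : Type*) [Ring B] (x : Finset α) :
    (∑ m ∈ x.powerset, (-1 : B) ^ m.card) = if x = ∅ then 1 else 0 := by
  have h := Finset.sum_powerset_neg_one_pow_card (x := x)
  have hc : (∑ m ∈ x.powerset, (-1 : B) ^ m.card)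
      = ((∑ m ∈ x.powerset, (-1 : ℤ) ^ m.card : ℤ) : B) := by
    push_cast
    rfl
  rw [hc, h]
  split <;> simp

lemma ysym_mul_zmon (R : Type*) [CommRing R] (u : ℕ) (T S : Finset (Fin u)) :
    ysym R u ((T.card : ℤ) - (S.card : ℤ)) * zmon R u S =
      ∑ W ∈ (Finset.powersetCard T.card (Finset.univ : Finset (Fin u))).filter
          (fun W => S ⊆ W), zmon R u W := by
  by_cases h : S.card ≤ T.card
  · rw [ysym, if_pos (by omega)]
    have htn : ((T.card : ℤ) - (S.card : ℤ)).toNat = T.card - S.card := by omega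
    rw [htn, Finset.sum_mul]
    have step : ∀ A ∈ Finset.powersetCard (T.card - S.card) (Finset.univ : Finset (Fin u)),
        zmon R u A * zmon R u S =
          if Disjoint A S then zmon R u (A ∪ S) else 0 := by
      intro A _
      by_cases hd : Disjoint A S
      · rw [if_pos hd, zmon_mul_disjoint R u hd]
      · rw [if_neg hd, zmon_mul_not_disjoint R u hd]
    rw [Finset.sum_congr rfl step, Finset.sum_ite, Finset.sum_const_zero, add_zero]
    refine Finset.sum_bij' (fun A _ => A ∪ S) (fun W _ => W \ S) ?_ ?_ ?_ ?_ ?_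
    · intro A hA
      simp only [Finset.mem_filter, Finset.mem_powersetCard] at hA ⊢
      obtain ⟨⟨_, hcard⟩, hd⟩ := hA
      refine ⟨⟨Finset.subset_univ _, ?_⟩, Finset.subset_union_right⟩
      rw [Finset.card_union_of_disjoint hd, hcard]
      omega
    · intro W hW
      simp only [Finset.mem_filter, Finset.mem_powersetCard] at hW ⊢
      obtain ⟨⟨_, hcard⟩, hsub⟩ := hW
      refine ⟨⟨Finset.subset_univ _, ?_⟩, Finset.sdiff_disjoint⟩
      rw [Finset.card_sdiff_of_subset hsub, hcard]
    · intro A hA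
      simp only [Finset.mem_filter] at hA
      exact Finset.union_sdiff_cancel_right hA.2
    · intro W hW
      simp only [Finset.mem_filter] at hW
      exact Finset.sdiff_union_of_subset hW.2
    · intro A _
      rfl
  · rw [ysym, if_neg (by omega), zero_mul]
    refine (Finset.sum_eq_zero ?_).symm
    intro W hW
    simp only [Finset.mem_filter, Finset.mem_powersetCard] at hW
    have := Finset.card_le_card hW.2
    omega

theorem statement6 (R : Type*) [CommRing R] (u : ℕ) (T : Finset (Fin u)) :
    zmon R u T =
      ∑ S ∈ Tᶜ.powerset,
        (-1 : SqZeroAlg R u) ^ S.card *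
          ysym R u ((T.card : ℤ) - (S.card : ℤ)) * zmon R u S := by
  symm
  calc
    ∑ S ∈ Tᶜ.powerset,
        (-1 : SqZeroAlg R u) ^ S.card *
          ysym R u ((T.card : ℤ) - (S.card : ℤ)) * zmon R u S
      = ∑ S ∈ Tᶜ.powerset, ∑ W ∈ Finset.powersetCard T.card (Finset.univ : Finset (Fin u)),
          (if S ⊆ W then (-1 : SqZeroAlg R u) ^ S.card * zmon R u W else 0) := by
        refine Finset.sum_congr rfl fun S _ => ?_
        rw [mul_assoc, ysym_mul_zmon, Finset.mul_sum, ← Finset.sum_filter]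
    _ = ∑ W ∈ Finset.powersetCard T.card (Finset.univ : Finset (Fin u)), ∑ S ∈ Tᶜ.powerset,
          (if S ⊆ W then (-1 : SqZeroAlg R u) ^ S.card * zmon R u W else 0) :=
        Finset.sum_comm
    _ = ∑ W ∈ Finset.powersetCard T.card (Finset.univ : Finset (Fin u)),
          (if W = T then zmon R u W else 0) := by
        refine Finset.sum_congr rfl fun W hW => ?_
        rw [← Finset.sum_filter]
        have hset : Tᶜ.powerset.filter (fun S => S ⊆ W) = (Tᶜ ∩ W).powerset := by
          ext S
          simp only [Finset.mem_filter, Finset.mem_powerset, Finset.subset_inter_iff]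
        rw [hset, ← Finset.sum_mul] at *
        rw [alt_sum_powerset]
        simp only [Finset.mem_powersetCard] at hW
        have hiff : Tᶜ ∩ W = ∅ ↔ W = T := by
          constructor
          · intro h
            have hsub : W ⊆ T := by
              intro x hx
              by_contra hxT
              have : x ∈ Tᶜ ∩ W := Finset.mem_inter.mpr ⟨Finset.mem_compl.mpr hxT, hx⟩
              simp [h] at this
            exact Finset.eq_of_subset_of_card_le hsub (by omega)
          · intro h
            subst h
            simp [Finset.inter_comm, Finset.inter_compl]
        by_cases h : W = T
        · rw [if_pos (hiff.mpr h), if_pos h, one_mul]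
        · rw [if_neg (fun he => h (hiff.mp he)), if_neg h, zero_mul]
    _ = zmon R u T := by
        rw [Finset.sum_ite_eq']
        rw [if_pos (Finset.mem_powersetCard.mpr ⟨Finset.subset_univ _, rfl⟩)]

end
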